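/- Suppose O_t is conditionally independent of H_{t-1} given (H_t, O_{1:t-1}). Then Pr(H_t = h | H_{t-1}, O_{1:t}) = [Pr(H_t = h | O_{1:t}) / Pr(H_t = h | O_{1:t-1})] · Pr(H_t = h | H_{t-1}, O_{1:t-1}) · [Pr(O_t | O_{1:t-1}) / Pr(O_t | H_{t-1}, O_{1:t-1})]. -/

import Mathlib

open Finset
open scoped Classical

noncomputable def Pr {Ω : Type*} [Fintype Ω] (p : Ω → ℝ) (A : Finset Ω) : ℝ :=
  ∑ ω ∈ A, p ω

noncomputable def cPr {Ω : Type*} [Fintype Ω] (p : Ω → ℝ) (A B : Finset Ω) : ℝ :=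
  Pr p (A ∩ B) / Pr p B

noncomputable def ev {Ω α : Type*} [Fintype Ω] (X : Ω → α) (x : α) : Finset Ω :=
  Finset.univ.filter (fun ω => X ω = x)

noncomputable def evSeq {Ω α : Type*} [Fintype Ω] (X : ℕ → Ω → α) (x : ℕ → α) (a b : ℕ) :
    Finset Ω :=
  (Finset.Icc a b).inf (fun u => ev (X u) (x u))

lemma evSeq_split {Ω α : Type*} [Fintype Ω] (X : ℕ → Ω → α) (x : ℕ → α) {t : ℕ} (ht : 1 ≤ t) :
    evSeq X x 1 t = evSeq X x 1 (t-1) ∩ ev (X t) (x t) := by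
  unfold evSeq
  have hi : Finset.Icc 1 t = insert t (Finset.Icc 1 (t-1)) := by
    ext u; simp only [Finset.mem_Icc, Finset.mem_insert]; omega
  have hn : t ∉ Finset.Icc 1 (t-1) := by simp [Finset.mem_Icc]; omega
  rw [hi, Finset.inf_insert]
  exact inter_comm _ _

lemma Pr_mono {Ω : Type*} [Fintype Ω] (p : Ω → ℝ) (hp : ∀ ω, 0 ≤ p ω) {A B : Finset Ω}
    (hAB : A ⊆ B) : Pr p A ≤ Pr p B :=
  Finset.sum_le_sum_of_subset_of_nonneg hAB (fun ω _ _ => hp ω)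

lemma alg (x1 x2 x3 x4 x5 x6 x7 x8 : ℝ) (h2 : x2 ≠ 0) (h4 : x4 ≠ 0) (h5 : x5 ≠ 0)
    (h6 : x6 ≠ 0) (h8 : x8 ≠ 0) (hk : x1 * x5 = x3 * x7) :
    x1 / x2 = x3 / x4 / (x5 / x6) * (x7 / x8) * (x4 / x6 / (x2 / x8)) := by
  field_simp
  linear_combination hk

/-- rewriting the transition posterior via conditional independence. -/
theorem transition_posterior_rewrite
    {Ω S V : Type*} [Fintype Ω] (p : Ω → ℝ)
    (hp : ∀ ω, 0 ≤ p ω) (hsum : ∑ ω, p ω = 1)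
    (t : ℕ) (ht : 1 ≤ t)
    (Hcur Hprev : Ω → S) (O : ℕ → Ω → V) (h h' : S) (o : ℕ → V)
    (hpos1 : 0 < Pr p (ev Hprev h' ∩ evSeq O o 1 t))
    (hpos2 : 0 < Pr p (ev Hprev h' ∩ evSeq O o 1 (t - 1)))
    (hpos3 : 0 < Pr p (ev Hcur h ∩ ev Hprev h' ∩ evSeq O o 1 (t - 1)))
    (hpos4 : 0 < Pr p (ev Hcur h ∩ evSeq O o 1 (t - 1)))
    (hpos5 : 0 < Pr p (evSeq O o 1 t))
    (hpos6 : 0 < cPr p (ev (O t) (o t)) (ev Hprev h' ∩ evSeq O o 1 (t - 1)))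
    -- O_t ⟂ H_{t-1} ∣ (H_t, O_{1:t-1}):
    (hCI : ∀ x : S, ∀ y : S,
      cPr p (ev (O t) (o t)) (ev Hcur x ∩ ev Hprev y ∩ evSeq O o 1 (t - 1)) =
        cPr p (ev (O t) (o t)) (ev Hcur x ∩ evSeq O o 1 (t - 1))) :
    cPr p (ev Hcur h) (ev Hprev h' ∩ evSeq O o 1 t) =
      cPr p (ev Hcur h) (evSeq O o 1 t) / cPr p (ev Hcur h) (evSeq O o 1 (t - 1)) *
        cPr p (ev Hcur h) (ev Hprev h' ∩ evSeq O o 1 (t - 1)) *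
        (cPr p (ev (O t) (o t)) (evSeq O o 1 (t - 1)) /
          cPr p (ev (O t) (o t)) (ev Hprev h' ∩ evSeq O o 1 (t - 1))) := by
  set A := ev Hcur h with hA
  set B := ev Hprev h' with hB
  set C := evSeq O o 1 (t-1) with hC
  set D := ev (O t) (o t) with hD
  have hsplit : evSeq O o 1 t = C ∩ D := evSeq_split O o ht
  have hCpos : 0 < Pr p C := lt_of_lt_of_le hpos2 (Pr_mono p hp (inter_subset_right))
  have hDBC : 0 < Pr p (D ∩ (B ∩ C)) := by
    unfold cPr at hpos6
    by_contra hle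
    push_neg at hle
    have : Pr p (D ∩ (B ∩ C)) / Pr p (B ∩ C) ≤ 0 := div_nonpos_of_nonpos_of_nonneg hle hpos2.le
    linarith
  have key := hCI h h'
  unfold cPr at key
  rw [div_eq_div_iff hpos3.ne' hpos4.ne'] at key
  unfold cPr
  rw [hsplit]
  have q1 : Pr p (A ∩ (B ∩ (C ∩ D))) = Pr p (D ∩ (A ∩ B ∩ C)) := by
    congr 1; ext ω; simp only [Finset.mem_inter]; tauto
  have q2 : Pr p (B ∩ (C ∩ D)) = Pr p (D ∩ (B ∩ C)) := by
    congr 1; ext ω; simp only [Finset.mem_inter]; tauto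
  have q3 : Pr p (A ∩ (C ∩ D)) = Pr p (D ∩ (A ∩ C)) := by
    congr 1; ext ω; simp only [Finset.mem_inter]; tauto
  have q4 : Pr p (A ∩ (B ∩ C)) = Pr p (A ∩ B ∩ C) := by
    congr 1; ext ω; simp only [Finset.mem_inter]; tauto
  have q5 : Pr p (D ∩ C) = Pr p (C ∩ D) := by
    congr 1; exact inter_comm _ _
  have key' : Pr p (D ∩ (A ∩ B ∩ C)) * Pr p (A ∩ C) = Pr p (D ∩ (A ∩ C)) * Pr p (A ∩ B ∩ C) := key
  have hCD : 0 < Pr p (C ∩ D) := by rw [hsplit] at hpos5; exact hpos5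
  rw [q1, q2, q3, q4, q5]
  exact alg _ _ _ _ _ _ _ _ hDBC.ne' hCD.ne' hpos4.ne' hCpos.ne' hpos2.ne' key'
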